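/- Fix a probability vector p̂ ∈ Δ(V) with p̂_1 ≥ … ≥ p̂_d > 0 and ε with p̂_d ≤ ε < p̂_1. Let î = max{i : p̂_i > ε}, ŵ_i = ε / log(p̂_i/(p̂_i − ε)) for i ≤ î, and let Î = max{I ≤ î : Σ_{i=1}^{I−1} ŵ_i log(p̂_i/p̂_I) ≤ ε}. Define q̃ ∈ Δ(V) by q̃_i = ŵ_i / (Σ_{k=1}^{Î} ŵ_k) for 1 ≤ i ≤ Î and q̃_i = 0 for i > Î. Then q̃ is optimal for the one-step Decoding Game: for every q ∈ Δ(V), inf_{p ∈ N(p̂)} Σ_i q_i log p_i ≤ inf_{p ∈ N(p̂)} Σ_i q̃_i log p_i (infima in the extended reals). -/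

import Mathlib

open Finset

noncomputable def elog (x : ℝ) : EReal := if x ≤ 0 then ⊥ else ((Real.log x : ℝ) : EReal)

def simplex (d : ℕ) : Set (Fin d → ℝ) := {p | (∀ i, 0 ≤ p i) ∧ ∑ i, p i = 1}

noncomputable def dTV {d : ℕ} (p q : Fin d → ℝ) : ℝ := (∑ i, |p i - q i|) / 2

def nbhd {d : ℕ} (phat : Fin d → ℝ) (ε : ℝ) : Set (Fin d → ℝ) :=
  {p | p ∈ simplex d ∧ dTV p phat ≤ ε}

noncomputable def obj {d : ℕ} (q p : Fin d → ℝ) : EReal :=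
  ∑ i, ((q i : ℝ) : EReal) * elog (p i)

/-- `ŵ_i = ε / log(p̂_i/(p̂_i − ε))`. -/
noncomputable def what {d : ℕ} (phat : Fin d → ℝ) (ε : ℝ) (i : Fin d) : ℝ :=
  ε / Real.log (phat i / (phat i - ε))

/-- Coercion of a real finset sum into `EReal`. -/
lemma ereal_coe_sum {α : Type*} (s : Finset α) (f : α → ℝ) :
    ((∑ i ∈ s, f i : ℝ) : EReal) = ∑ i ∈ s, ((f i : ℝ) : EReal) := by
  classical
  induction s using Finset.cons_induction with
  | empty => simp
  | cons a s ha ih => rw [Finset.sum_cons, Finset.sum_cons, EReal.coe_add, ih]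

/-- `obj` is the coercion of a real sum when all coordinates are positive. -/
lemma obj_coe {d : ℕ} (q p : Fin d → ℝ) (hp : ∀ i, 0 < p i) :
    obj q p = ((∑ i, q i * Real.log (p i) : ℝ) : EReal) := by
  unfold obj
  rw [ereal_coe_sum]
  refine Finset.sum_congr rfl fun i _ => ?_
  rw [elog, if_neg (not_le.2 (hp i)), ← EReal.coe_mul]

/-- The key pointwise adversary bound coming from concavity of `log`. -/
lemma pointw {a x ε : ℝ} (hε : 0 < ε) (ha : ε < a) (hxa : a - x ≤ ε) :
    (ε / (Real.log a - Real.log (a - ε))) * (Real.log a - Real.log x) ≤ max (a - x) 0 := by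
  have haε : 0 < a - ε := by linarith
  have ha0 : 0 < a := by linarith
  have hx0 : 0 < x := by linarith
  have hD : 0 < Real.log a - Real.log (a - ε) := by
    have := Real.log_lt_log haε (by linarith : a - ε < a)
    linarith
  rcases le_or_gt a x with hax | hax
  · have h1 : Real.log a - Real.log x ≤ 0 := by
      have := Real.log_le_log ha0 hax
      linarith
    have h2 : (ε / (Real.log a - Real.log (a - ε))) * (Real.log a - Real.log x) ≤ 0 :=
      mul_nonpos_of_nonneg_of_nonpos (div_nonneg hε.le hD.le) h1
    exact h2.trans (le_max_right _ _)
  · have hmax : max (a - x) 0 = a - x := max_eq_left (by linarith)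
    rw [hmax]
    set t : ℝ := (a - x) / ε with ht_def
    have ht0 : 0 ≤ t := div_nonneg (by linarith) hε.le
    have ht1 : t ≤ 1 := (div_le_one hε).2 hxa
    have htε : t * ε = a - x := div_mul_cancel₀ _ hε.ne'
    have hcomb : (1 - t) * a + t * (a - ε) = x := by linear_combination -htε
    have hconc :=
      (strictConcaveOn_log_Ioi.concaveOn).2 (Set.mem_Ioi.2 ha0) (Set.mem_Ioi.2 haε)
        (by linarith : (0:ℝ) ≤ 1 - t) ht0 (by ring)
    simp only [smul_eq_mul] at hconc
    rw [hcomb] at hconc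
    have hkey : Real.log a - Real.log x ≤ t * (Real.log a - Real.log (a - ε)) := by nlinarith
    have hnn : 0 ≤ ε / (Real.log a - Real.log (a - ε)) := div_nonneg hε.le hD.le
    calc (ε / (Real.log a - Real.log (a - ε))) * (Real.log a - Real.log x)
        ≤ (ε / (Real.log a - Real.log (a - ε))) * (t * (Real.log a - Real.log (a - ε))) :=
          mul_le_mul_of_nonneg_left hkey hnn
      _ = t * ε := by field_simp
      _ = a - x := htε

/-- Sum of a function supported on two points. -/
lemma sum_two {d : ℕ} (f : Fin d → ℝ) (j k : Fin d) (hjk : j ≠ k)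
    (h0 : ∀ i, i ≠ j → i ≠ k → f i = 0) : ∑ i, f i = f j + f k := by
  classical
  rw [← Finset.sum_subset (Finset.subset_univ ({j, k} : Finset (Fin d)))]
  · exact Finset.sum_pair hjk
  · intro x _ hx
    simp only [Finset.mem_insert, Finset.mem_singleton, not_or] at hx
    exact h0 x hx.1 hx.2

set_option maxHeartbeats 1000000 in
/-- the truncation-normalization strategy `q̃` (with weights `ŵ` and
truncation threshold `Î`) is optimal for the one-step Decoding Game. -/
theorem stmt1 {d : ℕ} (hd : 0 < d) (phat : Fin d → ℝ) (ε : ℝ)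
    (hmem : phat ∈ simplex d)
    (hpos : ∀ i, 0 < phat i)
    (hsort : ∀ i j : Fin d, i ≤ j → phat j ≤ phat i)
    (heps_lo : phat ⟨d - 1, by omega⟩ ≤ ε)
    (heps_hi : ε < phat ⟨0, hd⟩)
    (ihat : Fin d)
    (hihat1 : ε < phat ihat)
    (hihat2 : ∀ i : Fin d, ε < phat i → i ≤ ihat)
    (Ihat : Fin d)
    (hIhat_le : Ihat ≤ ihat)
    (hIhat_cond : ∑ i ∈ univ.filter (· < Ihat),
        what phat ε i * Real.log (phat i / phat Ihat) ≤ ε)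
    (hIhat_max : ∀ I : Fin d, I ≤ ihat →
        (∑ i ∈ univ.filter (· < I), what phat ε i * Real.log (phat i / phat I) ≤ ε) →
        I ≤ Ihat)
    (qt : Fin d → ℝ)
    (hqt : ∀ i : Fin d,
        qt i = if i ≤ Ihat then what phat ε i / ∑ k ∈ univ.filter (· ≤ Ihat), what phat ε k
          else 0) :
    ∀ q ∈ simplex d,
      ⨅ p ∈ nbhd phat ε, obj q p ≤ ⨅ p ∈ nbhd phat ε, obj qt p := by
  classical
  intro q hq
  obtain ⟨hq0, hq1⟩ := hq
  obtain ⟨hp0, hp1⟩ := hmem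
  have hε : 0 < ε := lt_of_lt_of_le (hpos _) heps_lo
  -- `i ≤ ihat ↔ ε < phat i`
  have hiff : ∀ i : Fin d, i ≤ ihat ↔ ε < phat i := by
    intro i
    constructor
    · intro h; exact lt_of_lt_of_le hihat1 (hsort i ihat h)
    · exact hihat2 i
  set w : Fin d → ℝ := what phat ε with hw_def
  set S : Finset (Fin d) := univ.filter (· ≤ Ihat) with hS_def
  clear_value S
  have hmemS : ∀ i : Fin d, i ∈ S ↔ i ≤ Ihat := by
    intro i; simp [hS_def]
  -- basic facts on `w`
  have hwfact : ∀ i : Fin d, i ≤ ihat →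
      0 < w i ∧ w i * (Real.log (phat i) - Real.log (phat i - ε)) = ε := by
    intro i hi
    have hεi : ε < phat i := (hiff i).1 hi
    have h1 : 0 < phat i - ε := by linarith
    have hD : 0 < Real.log (phat i) - Real.log (phat i - ε) := by
      have := Real.log_lt_log h1 (by linarith : phat i - ε < phat i)
      linarith
    have hlogdiv : Real.log (phat i / (phat i - ε))
        = Real.log (phat i) - Real.log (phat i - ε) :=
      Real.log_div (hpos i).ne' h1.ne'
    constructor
    · rw [hw_def]; unfold what; rw [hlogdiv]; exact div_pos hε hD
    · rw [hw_def]; unfold what; rw [hlogdiv]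
      field_simp
  have hwS : ∀ i ∈ S, 0 < w i := by
    intro i hi
    exact (hwfact i (le_trans ((hmemS i).1 hi) hIhat_le)).1
  set W : ℝ := ∑ i ∈ S, w i with hW_def
  clear_value W
  have hIhatS : Ihat ∈ S := (hmemS Ihat).2 le_rfl
  have hW : 0 < W := by rw [hW_def]; exact Finset.sum_pos hwS ⟨Ihat, hIhatS⟩
  set ℓ : Fin d → ℝ := fun i => Real.log (phat i) with hℓ_def
  have hℓ : ∀ i, ℓ i = Real.log (phat i) := fun i => by rw [hℓ_def]
  clear_value ℓ
  set B : ℝ := ∑ i ∈ S, w i * ℓ i with hB_def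
  clear_value B
  set L : ℝ := (B - ε) / W with hL_def
  clear_value L
  -- positivity of phat on S
  have hpS : ∀ i ∈ S, ε < phat i := by
    intro i hi
    exact (hiff i).1 (le_trans ((hmemS i).1 hi) hIhat_le)
  ---------------------------------------------------------------------------
  -- STEP I : L is a lower bound for obj qt p over the neighborhood
  ---------------------------------------------------------------------------
  have hStepI : ∀ p ∈ nbhd phat ε, ((L : ℝ) : EReal) ≤ obj qt p := by
    intro p hp
    obtain ⟨⟨hpp0, hpp1⟩, hptv⟩ := hp
    -- positive part sum bound
    have hpospart : ∑ j, max (phat j - p j) 0 ≤ ε := by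
      have habs : ∀ j, max (phat j - p j) 0 = ((phat j - p j) + |phat j - p j|) / 2 := by
        intro j
        rcases le_total 0 (phat j - p j) with h | h
        · rw [max_eq_left h, abs_of_nonneg h]; ring
        · rw [max_eq_right h, abs_of_nonpos h]; ring
      have h1 : ∑ j, max (phat j - p j) 0
          = ((∑ j, (phat j - p j)) + ∑ j, |phat j - p j|) / 2 := by
        rw [Finset.sum_congr rfl fun j _ => habs j, ← Finset.sum_div,
          Finset.sum_add_distrib]
      have h2 : ∑ j, (phat j - p j) = 0 := by
        rw [Finset.sum_sub_distrib, hp1, hpp1]; ring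
      have h3 : ∑ j, |phat j - p j| = ∑ j, |p j - phat j| :=
        Finset.sum_congr rfl fun j _ => abs_sub_comm _ _
      have h4 : (∑ j, |p j - phat j|) / 2 ≤ ε := hptv
      rw [h1, h2, h3]
      linarith
    have hplow : ∀ i, phat i - p i ≤ ε := by
      intro i
      have h1 : max (phat i - p i) 0 ≤ ∑ j, max (phat j - p j) 0 :=
        Finset.single_le_sum (f := fun j => max (phat j - p j) 0)
          (fun j _ => le_max_right _ _) (Finset.mem_univ i)
      have := le_max_left (phat i - p i) 0
      linarith
    have hpSpos : ∀ i ∈ S, 0 < p i := by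
      intro i hi
      have := hpS i hi
      have := hplow i
      linarith
    -- split obj qt p
    have hsplit : obj qt p = ∑ i ∈ S, ((qt i : ℝ) : EReal) * elog (p i) := by
      unfold obj
      rw [← Finset.sum_filter_add_sum_filter_not univ (· ≤ Ihat)
        (fun i => ((qt i : ℝ) : EReal) * elog (p i))]
      have : ∑ i ∈ univ.filter (fun i => ¬ i ≤ Ihat),
          ((qt i : ℝ) : EReal) * elog (p i) = 0 := by
        refine Finset.sum_eq_zero fun i hi => ?_
        rw [Finset.mem_filter] at hi
        rw [hqt i, if_neg hi.2]
        simp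
      rw [hS_def, this, add_zero]
    have hcoe : obj qt p = ((∑ i ∈ S, qt i * Real.log (p i) : ℝ) : EReal) := by
      rw [hsplit, ereal_coe_sum]
      refine Finset.sum_congr rfl fun i hi => ?_
      rw [elog, if_neg (not_le.2 (hpSpos i hi)), ← EReal.coe_mul]
    rw [hcoe, EReal.coe_le_coe_iff]
    -- real inequality
    have hqtS : ∀ i ∈ S, qt i = w i / W := by
      intro i hi
      rw [hqt i, if_pos ((hmemS i).1 hi)]
    have hpt : ∀ i ∈ S, w i * (ℓ i - Real.log (p i)) ≤ max (phat i - p i) 0 := by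
      intro i hi
      have hεi := hpS i hi
      have h := pointw hε hεi (hplow i)
      have hwi : w i = ε / (Real.log (phat i) - Real.log (phat i - ε)) := by
        rw [hw_def]; unfold what
        have h1 : (0:ℝ) < phat i - ε := by linarith
        rw [Real.log_div (hpos i).ne' h1.ne']
      rw [hwi, hℓ i]
      exact h
    have hsum1 : ∑ i ∈ S, w i * (ℓ i - Real.log (p i)) ≤ ε := by
      calc ∑ i ∈ S, w i * (ℓ i - Real.log (p i))
          ≤ ∑ i ∈ S, max (phat i - p i) 0 := Finset.sum_le_sum hpt
        _ ≤ ∑ i, max (phat i - p i) 0 :=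
            Finset.sum_le_sum_of_subset_of_nonneg (Finset.subset_univ S)
              (fun i _ _ => le_max_right _ _)
        _ ≤ ε := hpospart
    have hsum2 : B - ∑ i ∈ S, w i * Real.log (p i) ≤ ε := by
      have : ∑ i ∈ S, w i * (ℓ i - Real.log (p i))
          = B - ∑ i ∈ S, w i * Real.log (p i) := by
        rw [hB_def, ← Finset.sum_sub_distrib]
        exact Finset.sum_congr rfl fun i _ => by ring
      linarith [hsum1, this.symm.le]
    have heq : ∑ i ∈ S, qt i * Real.log (p i)
        = (∑ i ∈ S, w i * Real.log (p i)) / W := by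
      rw [Finset.sum_div]
      refine Finset.sum_congr rfl fun i hi => ?_
      rw [hqtS i hi]; ring
    rw [heq, hL_def, div_le_div_iff_of_pos_right hW]
    linarith
  ---------------------------------------------------------------------------
  -- STEP II : exhibit p⋆ with obj q p⋆ ≤ L
  ---------------------------------------------------------------------------
  have hStepII : ⨅ p ∈ nbhd phat ε, obj q p ≤ ((L : ℝ) : EReal) := by
    by_cases hsupp : ∃ j, phat j ≤ ε ∧ 0 < q j
    · -- zero out coordinate j
      obtain ⟨j, hj1, hj2⟩ := hsupp
      set k : Fin d := ⟨0, hd⟩ with hk_def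
      have hjk : j ≠ k := by
        intro h; rw [h] at hj1; exact absurd heps_hi (not_lt.2 hj1)
      set pstar : Fin d → ℝ :=
        fun i => if i = j then 0 else if i = k then phat i + phat j else phat i
        with hps_def
      have hps_j : pstar j = 0 := by
        simp [hps_def]
      have hps_k : pstar k = phat k + phat j := by
        simp [hps_def, Ne.symm hjk]
      have hps_other : ∀ i, i ≠ j → i ≠ k → pstar i = phat i := by
        intro i h1 h2; simp [hps_def, h1, h2]
      clear_value pstar
      have hdiff : ∀ i, i ≠ j → i ≠ k → pstar i - phat i = 0 := by
        intro i h1 h2; rw [hps_other i h1 h2]; ring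
      have hmem' : pstar ∈ nbhd phat ε := by
        refine ⟨⟨?_, ?_⟩, ?_⟩
        · intro i
          by_cases h1 : i = j
          · rw [h1, hps_j]
          · by_cases h2 : i = k
            · rw [h2, hps_k]; have := hpos k; have := hpos j; linarith
            · rw [hps_other i h1 h2]; exact (hpos i).le
        · have : ∑ i, (pstar i - phat i) = (pstar j - phat j) + (pstar k - phat k) :=
            sum_two _ j k hjk hdiff
          rw [Finset.sum_sub_distrib, hp1] at this
          rw [hps_j, hps_k] at this
          have h5 : ∑ i, pstar i = 1 := by linarith
          exact h5
        · unfold dTV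
          have : ∑ i, |pstar i - phat i| = |pstar j - phat j| + |pstar k - phat k| := by
            refine sum_two _ j k hjk fun i h1 h2 => ?_
            rw [hdiff i h1 h2, abs_zero]
          rw [this, hps_j, hps_k]
          have h6 : |(0:ℝ) - phat j| = phat j := by
            rw [abs_sub_comm, sub_zero, abs_of_pos (hpos j)]
          have h7 : |phat k + phat j - phat k| = phat j := by
            have : phat k + phat j - phat k = phat j := by ring
            rw [this, abs_of_pos (hpos j)]
          rw [h6, h7]
          linarith
      have hbot : obj q pstar = ⊥ := by
        unfold obj
        rw [← Finset.sum_erase_add univ _ (Finset.mem_univ j)]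
        have h1 : ((q j : ℝ) : EReal) * elog (pstar j) = ⊥ := by
          rw [hps_j, elog, if_pos le_rfl]
          exact EReal.coe_mul_bot_of_pos hj2
        have h2 : ∑ i ∈ univ.erase j, ((q i : ℝ) : EReal) * elog (pstar i)
            = ((∑ i ∈ univ.erase j, q i * Real.log (pstar i) : ℝ) : EReal) := by
          rw [ereal_coe_sum]
          refine Finset.sum_congr rfl fun i hi => ?_
          have hij : i ≠ j := Finset.ne_of_mem_erase hi
          have hpos' : 0 < pstar i := by
            by_cases h2 : i = k
            · rw [h2, hps_k]; have := hpos k; have := hpos j; linarith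
            · rw [hps_other i hij h2]; exact hpos i
          rw [elog, if_neg (not_le.2 hpos'), ← EReal.coe_mul]
        rw [h1, h2, EReal.add_bot]
      calc ⨅ p ∈ nbhd phat ε, obj q p ≤ obj q pstar :=
            iInf₂_le_of_le pstar hmem' le_rfl
        _ = ⊥ := hbot
        _ ≤ ((L : ℝ) : EReal) := bot_le
    · -- q is supported where phat > ε
      push_neg at hsupp
      have hqzero : ∀ i, phat i ≤ ε → q i = 0 := by
        intro i hi
        exact le_antisymm (hsupp i hi) (hq0 i)
      -- choose the best attack coordinate j0 in S
      obtain ⟨j0, hj0S, hj0max⟩ :=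
        Finset.exists_max_image S (fun i => q i / w i) ⟨Ihat, hIhatS⟩
      set r : ℝ := q j0 / w j0 with hr_def
      clear_value r
      have hr0 : 0 ≤ r := by rw [hr_def]; exact div_nonneg (hq0 j0) (hwS j0 hj0S).le
      have hqrw : ∀ i ∈ S, q i ≤ r * w i := by
        intro i hi
        have h1 : q i / w i ≤ r := hj0max i hi
        have h2 := hwS i hi
        calc q i = (q i / w i) * w i := by field_simp
          _ ≤ r * w i := mul_le_mul_of_nonneg_right h1 h2.le
      set k : Fin d := ⟨d - 1, by omega⟩ with hk_def
      have hqk : q k = 0 := hqzero k heps_lo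
      have hj0k : j0 ≠ k := by
        intro h
        have h1 := hpS j0 hj0S
        rw [h] at h1
        exact absurd heps_lo (not_le.2 h1)
      set pstar : Fin d → ℝ :=
        fun i => if i = j0 then phat i - ε else if i = k then phat i + ε else phat i
        with hps_def
      have hps_j : pstar j0 = phat j0 - ε := by
        simp [hps_def]
      have hps_k : pstar k = phat k + ε := by
        simp [hps_def, Ne.symm hj0k]
      have hps_other : ∀ i, i ≠ j0 → i ≠ k → pstar i = phat i := by
        intro i h1 h2; simp [hps_def, h1, h2]
      clear_value pstar
      have hdiff : ∀ i, i ≠ j0 → i ≠ k → pstar i - phat i = 0 := by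
        intro i h1 h2; rw [hps_other i h1 h2]; ring
      have hj0ε : ε < phat j0 := hpS j0 hj0S
      have hmem' : pstar ∈ nbhd phat ε := by
        refine ⟨⟨?_, ?_⟩, ?_⟩
        · intro i
          by_cases h1 : i = j0
          · rw [h1, hps_j]; linarith
          · by_cases h2 : i = k
            · rw [h2, hps_k]; have := hpos k; linarith
            · rw [hps_other i h1 h2]; exact (hpos i).le
        · have : ∑ i, (pstar i - phat i) = (pstar j0 - phat j0) + (pstar k - phat k) :=
            sum_two _ j0 k hj0k hdiff
          rw [Finset.sum_sub_distrib, hp1] at this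
          rw [hps_j, hps_k] at this
          have h5 : ∑ i, pstar i = 1 := by linarith
          exact h5
        · unfold dTV
          have : ∑ i, |pstar i - phat i| = |pstar j0 - phat j0| + |pstar k - phat k| := by
            refine sum_two _ j0 k hj0k fun i h1 h2 => ?_
            rw [hdiff i h1 h2, abs_zero]
          rw [this, hps_j, hps_k]
          have h6 : |phat j0 - ε - phat j0| = ε := by
            have : phat j0 - ε - phat j0 = -ε := by ring
            rw [this, abs_neg, abs_of_pos hε]
          have h7 : |phat k + ε - phat k| = ε := by
            have : phat k + ε - phat k = ε := by ring
            rw [this, abs_of_pos hε]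
          rw [h6, h7]
          linarith
      have hpstarpos : ∀ i, 0 < pstar i := by
        intro i
        by_cases h1 : i = j0
        · rw [h1, hps_j]; linarith
        · by_cases h2 : i = k
          · rw [h2, hps_k]; have := hpos k; linarith
          · rw [hps_other i h1 h2]; exact hpos i
      -- objective value at pstar
      set A : ℝ := ∑ i, q i * ℓ i with hA_def
      clear_value A
      have hwj0 := hwS j0 hj0S
      have hεw : Real.log (phat j0) - Real.log (phat j0 - ε) = ε / w j0 := by
        have h := (hwfact j0 (le_trans ((hmemS j0).1 hj0S) hIhat_le)).2
        rw [eq_div_iff hwj0.ne']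
        linear_combination h
      have hobjval : obj q pstar = ((A - ε * r : ℝ) : EReal) := by
        rw [obj_coe q pstar hpstarpos]
        congr 1
        have hterm : ∀ i : Fin d, q i * Real.log (pstar i)
            = q i * ℓ i + (if i = j0 then -(ε * r) else 0) := by
          intro i
          by_cases h1 : i = j0
          · subst h1
            rw [if_pos rfl, hps_j]
            have he1 : Real.log (phat i - ε) = ℓ i - ε / w i := by
              rw [hℓ i]; linarith [hεw]
            rw [he1]
            have he2 : ε * r = q i * (ε / w i) := by
              rw [hr_def]; field_simp
            rw [he2]; ring
          · rw [if_neg h1]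
            by_cases h2 : i = k
            · subst h2
              rw [hqk]; ring
            · rw [hps_other i h1 h2, hℓ i]; ring
        rw [Finset.sum_congr rfl fun i _ => hterm i, Finset.sum_add_distrib,
          Finset.sum_ite_eq' univ j0 (fun _ => -(ε * r)), if_pos (Finset.mem_univ j0),
          hA_def]
        ring
      -- the real inequality  A - ε r ≤ L
      set Q : ℝ := ∑ i ∈ S, q i with hQ_def
      clear_value Q
      have hQ1 : Q ≤ 1 := by
        rw [hQ_def, ← hq1]
        exact Finset.sum_le_sum_of_subset_of_nonneg (Finset.subset_univ S)
          (fun i _ _ => hq0 i)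
      have hQrW : Q ≤ r * W := by
        rw [hQ_def, hW_def, Finset.mul_sum]
        exact Finset.sum_le_sum hqrw
      -- choose threshold t by case analysis
      have hmain : A - ε * r ≤ L := by
        have haux : ∀ t : ℝ, (∀ i ∈ S, t ≤ ℓ i) → (∀ i ∉ S, ℓ i ≤ t) →
            (r * W - 1) * (B - W * t - ε) ≤ 0 → A - ε * r ≤ L := by
          intro t htlow hthi hsign
          -- h1 : A ≤ r*B + (1 - r*W)*t
          have hsplitA : A = (∑ i ∈ S, q i * ℓ i)
              + ∑ i ∈ univ.filter (fun i => ¬ i ≤ Ihat), q i * ℓ i := by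
            rw [hA_def, ← Finset.sum_filter_add_sum_filter_not univ (· ≤ Ihat)
              (fun i => q i * ℓ i), hS_def]
          have hsumQ : Q + ∑ i ∈ univ.filter (fun i => ¬ i ≤ Ihat), q i = 1 := by
            rw [hQ_def, hS_def, Finset.sum_filter_add_sum_filter_not univ (· ≤ Ihat) q,
              hq1]
          have hout : ∑ i ∈ univ.filter (fun i => ¬ i ≤ Ihat), q i * ℓ i
              ≤ (1 - Q) * t := by
            have h1 : ∑ i ∈ univ.filter (fun i => ¬ i ≤ Ihat), q i * ℓ i
                ≤ ∑ i ∈ univ.filter (fun i => ¬ i ≤ Ihat), q i * t := by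
              refine Finset.sum_le_sum fun i hi => ?_
              have hiS : i ∉ S := by
                rw [hmemS]
                exact (Finset.mem_filter.1 hi).2
              exact mul_le_mul_of_nonneg_left (hthi i hiS) (hq0 i)
            have h2 : ∑ i ∈ univ.filter (fun i => ¬ i ≤ Ihat), q i * t
                = (1 - Q) * t := by
              rw [← Finset.sum_mul]
              congr 1
              linarith
            linarith
          have hin : ∑ i ∈ S, q i * ℓ i ≤ r * B + (Q - r * W) * t := by
            have h1 : ∀ i ∈ S, q i * ℓ i - r * (w i * ℓ i) ≤ (q i - r * w i) * t := by
              intro i hi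
              have h2 : q i - r * w i ≤ 0 := by linarith [hqrw i hi]
              have h3 : (q i - r * w i) * ℓ i ≤ (q i - r * w i) * t := by
                rcases eq_or_lt_of_le h2 with h4 | h4
                · rw [h4]; simp
                · have := htlow i hi
                  nlinarith
              nlinarith [h3]
            have h5 : ∑ i ∈ S, (q i * ℓ i - r * (w i * ℓ i))
                ≤ ∑ i ∈ S, (q i - r * w i) * t := Finset.sum_le_sum h1
            have h6 : ∑ i ∈ S, (q i * ℓ i - r * (w i * ℓ i))
                = (∑ i ∈ S, q i * ℓ i) - r * B := by
              rw [Finset.sum_sub_distrib, hB_def, Finset.mul_sum]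
            have h7 : ∑ i ∈ S, (q i - r * w i) * t = (Q - r * W) * t := by
              rw [← Finset.sum_mul, Finset.sum_sub_distrib, hQ_def, hW_def,
                Finset.mul_sum]
            rw [h6, h7] at h5
            linarith
          have h1 : A ≤ r * B + (1 - r * W) * t := by
            rw [hsplitA]
            have := hout
            have := hin
            nlinarith
          -- conclude
          rw [hL_def, le_div_iff₀ hW]
          have h1' : A * W ≤ (r * B + (1 - r * W) * t) * W :=
            mul_le_mul_of_nonneg_right h1 hW.le
          nlinarith [h1', hsign]
        rcases le_or_gt 1 (r * W) with hcase | hcase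
        · -- t = ℓ Ihat
          refine haux (ℓ Ihat) ?_ ?_ ?_
          · intro i hi
            rw [hℓ i, hℓ Ihat]
            exact Real.log_le_log (hpos Ihat) (hsort i Ihat ((hmemS i).1 hi))
          · intro i hi
            have h1 : Ihat ≤ i := le_of_not_ge (fun h => hi ((hmemS i).2 h))
            rw [hℓ i, hℓ Ihat]
            exact Real.log_le_log (hpos i) (hsort Ihat i h1)
          · -- B - W * ℓ Ihat ≤ ε  from hIhat_cond
            have hBW : B - W * ℓ Ihat ≤ ε := by
              have hexp : B - W * ℓ Ihat = ∑ i ∈ S, w i * (ℓ i - ℓ Ihat) := by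
                rw [hB_def, hW_def, Finset.sum_mul, ← Finset.sum_sub_distrib]
                exact Finset.sum_congr rfl fun i _ => by ring
              have hSins : S = insert Ihat (univ.filter (· < Ihat)) := by
                ext i
                simp only [hS_def, Finset.mem_filter, Finset.mem_univ, true_and,
                  Finset.mem_insert]
                constructor
                · intro h
                  rcases lt_or_eq_of_le h with h1 | h1
                  · exact Or.inr h1
                  · exact Or.inl h1
                · rintro (h | h)
                  · exact le_of_eq h
                  · exact le_of_lt h
              have hnot : Ihat ∉ univ.filter (· < Ihat) := by
                simp
              have hsum : ∑ i ∈ S, w i * (ℓ i - ℓ Ihat)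
                  = ∑ i ∈ univ.filter (· < Ihat), w i * (ℓ i - ℓ Ihat) := by
                rw [hSins, Finset.sum_insert hnot]
                simp
              have hlog : ∀ i ∈ univ.filter (· < Ihat),
                  w i * (ℓ i - ℓ Ihat) = w i * Real.log (phat i / phat Ihat) := by
                intro i _
                rw [Real.log_div (hpos i).ne' (hpos Ihat).ne', hℓ i, hℓ Ihat]
              rw [hexp, hsum, Finset.sum_congr rfl hlog]
              exact hIhat_cond
            have h1 : 0 ≤ r * W - 1 := by linarith
            have h2 : B - W * ℓ Ihat - ε ≤ 0 := by linarith
            exact mul_nonpos_of_nonneg_of_nonpos h1 h2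
        · -- r*W < 1 : mass beyond Ihat, use threshold at Ihat+1
          have hIi : Ihat < ihat := by
            by_contra hcon
            push_neg at hcon
            -- then q is supported on S, so Q = 1, contradiction with Q ≤ rW < 1
            have hout0 : ∑ i ∈ univ.filter (fun i => ¬ i ≤ Ihat), q i = 0 := by
              refine Finset.sum_eq_zero fun i hi => ?_
              have h1 : ¬ i ≤ Ihat := (Finset.mem_filter.1 hi).2
              have h2 : ¬ i ≤ ihat := fun h => h1 (le_trans h hcon)
              have h3 : phat i ≤ ε := le_of_not_gt (fun h => h2 (hihat2 i h))
              exact hqzero i h3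
            have hsumQ : Q + ∑ i ∈ univ.filter (fun i => ¬ i ≤ Ihat), q i = 1 := by
              rw [hQ_def, hS_def, Finset.sum_filter_add_sum_filter_not univ (· ≤ Ihat) q,
                hq1]
            rw [hout0, add_zero] at hsumQ
            linarith
          have hI'lt : (Ihat : ℕ) + 1 < d := by
            have h1 : (Ihat : ℕ) < (ihat : ℕ) := hIi
            have h2 : (ihat : ℕ) < d := ihat.isLt
            omega
          set I' : Fin d := ⟨(Ihat : ℕ) + 1, hI'lt⟩ with hI'_def
          have hI'le : I' ≤ ihat := by
            have h1 : (Ihat : ℕ) < (ihat : ℕ) := hIi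
            rw [Fin.le_def]
            simp only [hI'_def]
            omega
          have hI'notle : ¬ I' ≤ Ihat := by
            rw [Fin.le_def]
            simp only [hI'_def]
            omega
          have hfilterI' : univ.filter (· < I') = S := by
            ext i
            simp only [Finset.mem_filter, Finset.mem_univ, true_and, hS_def,
              Fin.lt_def, Fin.le_def, hI'_def]
            omega
          have hcond' : ε < ∑ i ∈ univ.filter (· < I'),
              w i * Real.log (phat i / phat I') := by
            by_contra hcon
            push_neg at hcon
            exact hI'notle (hIhat_max I' hI'le hcon)
          refine haux (ℓ I') ?_ ?_ ?_
          · intro i hi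
            have h1 : i ≤ I' := by
              have := (hmemS i).1 hi
              rw [Fin.le_def] at this ⊢
              simp only [hI'_def]
              omega
            rw [hℓ i, hℓ I']
            exact Real.log_le_log (hpos I') (hsort i I' h1)
          · intro i hi
            have h1 : I' ≤ i := by
              have h2 : ¬ i ≤ Ihat := fun h => hi ((hmemS i).2 h)
              rw [Fin.le_def] at h2 ⊢
              simp only [hI'_def]
              omega
            rw [hℓ i, hℓ I']
            exact Real.log_le_log (hpos i) (hsort I' i h1)
          · -- ε < B - W * ℓ I'
            have hexp : B - W * ℓ I' = ∑ i ∈ S, w i * (ℓ i - ℓ I') := by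
              rw [hB_def, hW_def, Finset.sum_mul, ← Finset.sum_sub_distrib]
              exact Finset.sum_congr rfl fun i _ => by ring
            have hlog : ∀ i ∈ S, w i * (ℓ i - ℓ I') = w i * Real.log (phat i / phat I') := by
              intro i _
              rw [Real.log_div (hpos i).ne' (hpos I').ne', hℓ i, hℓ I']
            have hBW : ε < B - W * ℓ I' := by
              rw [hexp, Finset.sum_congr rfl hlog, ← hfilterI']
              exact hcond'
            have h1 : r * W - 1 ≤ 0 := by linarith
            have h2 : 0 ≤ B - W * ℓ I' - ε := by linarith
            exact mul_nonpos_of_nonpos_of_nonneg h1 h2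
      calc ⨅ p ∈ nbhd phat ε, obj q p ≤ obj q pstar :=
            iInf₂_le_of_le pstar hmem' le_rfl
        _ = ((A - ε * r : ℝ) : EReal) := hobjval
        _ ≤ ((L : ℝ) : EReal) := EReal.coe_le_coe_iff.2 hmain
  exact le_trans hStepII (le_iInf₂ hStepI)
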